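/- arXiv:2405.15547 — 5 statements merged into one kernel-verified Lean document; each statement's English description precedes it below -/
import Mathlib

section
/- If A and B are n×n real matrices such that the sum of singular values of A+B equals the sum of singular values of A plus the sum of singular values of B, then there exists a real orthogonal matrix P such that PA and PB are both positive semi-definite. -/
open Matrix

/-- The sum of the singular values of a square real matrix:
singular values are the square roots of the eigenvalues of `Aᵀ * A`. -/
noncomputable def sumSingularValues {n : ℕ} (A : Matrix (Fin n) (Fin n) ℝ) : ℝ :=
  ∑ i, Real.sqrt ((Matrix.isHermitian_conjTranspose_mul_self A).eigenvalues i)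

namespace SVAux

variable {n : ℕ}

/-- the matrix whose columns are the vectors of an orthonormal basis -/
noncomputable def bm (b : OrthonormalBasis (Fin n) ℝ (EuclideanSpace ℝ (Fin n))) :
    Matrix (Fin n) (Fin n) ℝ := fun k i => b i k

lemma dot_b (b : OrthonormalBasis (Fin n) ℝ (EuclideanSpace ℝ (Fin n))) (i j : Fin n) :
    ⇑(b i) ⬝ᵥ ⇑(b j) = if i = j then (1:ℝ) else 0 := by
  have h := b.orthonormal
  rw [orthonormal_iff_ite] at h
  have h2 := h i j
  rw [PiLp.inner_apply] at h2
  simpa [dotProduct, RCLike.inner_apply, mul_comm] using h2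

lemma bmT_mul_bm (b : OrthonormalBasis (Fin n) ℝ (EuclideanSpace ℝ (Fin n))) :
    (bm b)ᵀ * bm b = 1 := by
  ext i j
  have := dot_b b i j
  simpa [mul_apply, bm, transpose_apply, one_apply, dotProduct] using this

lemma bm_mul_bmT (b : OrthonormalBasis (Fin n) ℝ (EuclideanSpace ℝ (Fin n))) :
    bm b * (bm b)ᵀ = 1 :=
  mul_eq_one_comm.mp (bmT_mul_bm b)

lemma bm_mulVec_single (b : OrthonormalBasis (Fin n) ℝ (EuclideanSpace ℝ (Fin n)))
    (j : Fin n) (c : ℝ) : bm b *ᵥ Pi.single j c = c • ⇑(b j) := by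
  ext k
  simp [mulVec_single, bm, mul_comm]

lemma bmT_mulVec_b (b : OrthonormalBasis (Fin n) ℝ (EuclideanSpace ℝ (Fin n)))
    (j : Fin n) : (bm b)ᵀ *ᵥ ⇑(b j) = Pi.single j 1 := by
  have h : ⇑(b j) = bm b *ᵥ Pi.single j 1 := by
    rw [bm_mulVec_single, one_smul]
  rw [h, mulVec_mulVec, bmT_mul_bm, one_mulVec]

/-- the singular values -/
noncomputable def sval (M : Matrix (Fin n) (Fin n) ℝ) : Fin n → ℝ :=
  fun i => Real.sqrt ((Matrix.isHermitian_conjTranspose_mul_self M).eigenvalues i)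

/-- eigenvector basis of `Mᵀ * M` -/
noncomputable def eb (M : Matrix (Fin n) (Fin n) ℝ) :
    OrthonormalBasis (Fin n) ℝ (EuclideanSpace ℝ (Fin n)) :=
  (Matrix.isHermitian_conjTranspose_mul_self M).eigenvectorBasis

lemma ct_eq (M : Matrix (Fin n) (Fin n) ℝ) : Mᴴ = Mᵀ := by
  ext i j; simp [conjTranspose_apply]

lemma psdMtM (M : Matrix (Fin n) (Fin n) ℝ) : (Mᵀ * M).PosSemidef :=
  ct_eq M ▸ posSemidef_conjTranspose_mul_self M

lemma eig_nonneg (M : Matrix (Fin n) (Fin n) ℝ) (i : Fin n) :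
    0 ≤ (Matrix.isHermitian_conjTranspose_mul_self M).eigenvalues i :=
  (posSemidef_conjTranspose_mul_self M).eigenvalues_nonneg i

lemma sval_nonneg (M : Matrix (Fin n) (Fin n) ℝ) (i : Fin n) : 0 ≤ sval M i :=
  Real.sqrt_nonneg _

lemma sval_sq (M : Matrix (Fin n) (Fin n) ℝ) (i : Fin n) :
    sval M i * sval M i = (Matrix.isHermitian_conjTranspose_mul_self M).eigenvalues i :=
  Real.mul_self_sqrt (eig_nonneg M i)

lemma MtM_mulVec (M : Matrix (Fin n) (Fin n) ℝ) (j : Fin n) :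
    (Mᵀ * M) *ᵥ ⇑(eb M j) =
      (Matrix.isHermitian_conjTranspose_mul_self M).eigenvalues j • ⇑(eb M j) :=
  by rw [← ct_eq]; exact (Matrix.isHermitian_conjTranspose_mul_self M).mulVec_eigenvectorBasis j

lemma dot_mulVec_left (P : Matrix (Fin n) (Fin n) ℝ) (x y : Fin n → ℝ) :
    (P *ᵥ x) ⬝ᵥ y = x ⬝ᵥ (Pᵀ *ᵥ y) := by
  rw [dotProduct_mulVec, vecMul_transpose, dotProduct_comm]

lemma dot_M_eb (M : Matrix (Fin n) (Fin n) ℝ) (i j : Fin n) :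
    (M *ᵥ ⇑(eb M i)) ⬝ᵥ (M *ᵥ ⇑(eb M j)) =
      if i = j then (Matrix.isHermitian_conjTranspose_mul_self M).eigenvalues j else 0 := by
  rw [dot_mulVec_left, mulVec_mulVec, MtM_mulVec, dotProduct_smul,
    smul_eq_mul, dot_b]
  split <;> simp

lemma mulVec_eb_eq_zero (M : Matrix (Fin n) (Fin n) ℝ) (j : Fin n)
    (h : sval M j = 0) : M *ᵥ ⇑(eb M j) = 0 := by
  have hd := dot_M_eb M j j
  have hl : (Matrix.isHermitian_conjTranspose_mul_self M).eigenvalues j = 0 := by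
    rw [← sval_sq, h, mul_zero]
  rw [if_pos rfl, hl] at hd
  exact dotProduct_self_eq_zero.mp hd

/-- matrices agreeing on the eigenbasis are equal -/
lemma ext_mulVec_eb (M X Y : Matrix (Fin n) (Fin n) ℝ)
    (h : ∀ j, X *ᵥ ⇑(eb M j) = Y *ᵥ ⇑(eb M j)) : X = Y := by
  have h1 : X * bm (eb M) = Y * bm (eb M) := by
    ext k j
    have := congrFun (h j) k
    simpa [mul_apply, mulVec, dotProduct, bm] using this
  calc X = X * (bm (eb M) * (bm (eb M))ᵀ) := by rw [bm_mul_bmT, mul_one]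
    _ = Y * (bm (eb M) * (bm (eb M))ᵀ) := by rw [← mul_assoc, h1, mul_assoc]
    _ = Y := by rw [bm_mul_bmT, mul_one]

/-- action of `E * diag σ * Eᵀ` on the eigenbasis -/
lemma S_mulVec (M : Matrix (Fin n) (Fin n) ℝ) (j : Fin n) :
    (bm (eb M) * diagonal (sval M) * (bm (eb M))ᵀ) *ᵥ ⇑(eb M j)
      = sval M j • ⇑(eb M j) := by
  rw [← mulVec_mulVec, ← mulVec_mulVec, bmT_mulVec_b, diagonal_mulVec_single,
    mul_one, bm_mulVec_single]

/-- polar decomposition -/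
lemma polar (M : Matrix (Fin n) (Fin n) ℝ) :
    ∃ W : Matrix (Fin n) (Fin n) ℝ, Wᵀ * W = 1 ∧
      W * M = bm (eb M) * diagonal (sval M) * (bm (eb M))ᵀ := by
  classical
  set s : Set (Fin n) := {i | sval M i ≠ 0} with hs
  set v : Fin n → EuclideanSpace ℝ (Fin n) :=
    fun i => (sval M i)⁻¹ • ((WithLp.equiv 2 _).symm (M *ᵥ ⇑(eb M i))) with hv
  have hortho : Orthonormal ℝ (s.restrict v) := by
    rw [orthonormal_iff_ite]
    rintro ⟨i, hi⟩ ⟨j, hj⟩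
    have hdot := dot_M_eb M i j
    have : (inner ℝ (v i) (v j) : ℝ)
        = (sval M i)⁻¹ * ((sval M j)⁻¹ * ((M *ᵥ ⇑(eb M i)) ⬝ᵥ (M *ᵥ ⇑(eb M j)))) := by
      simp [hv, PiLp.inner_apply, RCLike.inner_apply, dotProduct, Finset.mul_sum,
        mul_assoc, mul_left_comm, mul_comm]
    show inner ℝ (v i) (v j) = _
    rw [this, hdot]
    by_cases hij : i = j
    · subst hij
      simp only [if_pos rfl, Subtype.mk_eq_mk]
      rw [← sval_sq]
      field_simp
      simp [show sval M i ≠ 0 from hi]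
    · simp [hij, Subtype.mk_eq_mk]
  obtain ⟨f, hf⟩ := hortho.exists_orthonormalBasis_extension_of_card_eq (by simp)
  -- key: M *ᵥ e j = σ j • f j
  have key : ∀ j, M *ᵥ ⇑(eb M j) = sval M j • ⇑(f j) := by
    intro j
    by_cases hj : sval M j = 0
    · rw [hj, zero_smul, mulVec_eb_eq_zero M j hj]
    · have hfj : f j = v j := hf j hj
      rw [hfj]
      have : ⇑(v j) = (sval M j)⁻¹ • (M *ᵥ ⇑(eb M j)) := rfl
      rw [this, smul_smul, mul_inv_cancel₀ hj, one_smul]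
  refine ⟨bm (eb M) * (bm f)ᵀ, ?_, ?_⟩
  · rw [transpose_mul, transpose_transpose, mul_assoc, ← mul_assoc (bm (eb M))ᵀ,
      bmT_mul_bm, one_mul, bm_mul_bmT]
  · apply ext_mulVec_eb M
    intro j
    rw [S_mulVec, ← mulVec_mulVec, key j, mulVec_smul, ← mulVec_mulVec,
      bmT_mulVec_b, bm_mulVec_single, one_smul]

lemma S_psd (M : Matrix (Fin n) (Fin n) ℝ) :
    (bm (eb M) * diagonal (sval M) * (bm (eb M))ᵀ).PosSemidef := by
  have hd : (diagonal (sval M)).PosSemidef :=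
    PosSemidef.diagonal (fun i => sval_nonneg M i)
  have := hd.mul_mul_conjTranspose_same (bm (eb M))
  rwa [ct_eq] at this

lemma trace_S (M : Matrix (Fin n) (Fin n) ℝ) :
    trace (bm (eb M) * diagonal (sval M) * (bm (eb M))ᵀ) = ∑ i, sval M i := by
  rw [trace_mul_cycle, bmT_mul_bm, one_mul, trace_diagonal]

lemma trace_mul_diagonal (X : Matrix (Fin n) (Fin n) ℝ) (d : Fin n → ℝ) :
    trace (X * diagonal d) = ∑ i, X i i * d i := by
  simp [trace, diag, mul_apply, diagonal, mul_ite, mul_zero]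

lemma dot_V_le (V : Matrix (Fin n) (Fin n) ℝ) (hV : Vᵀ * V = 1) (x : Fin n → ℝ)
    (hx : x ⬝ᵥ x = 1) :
    x ⬝ᵥ (V *ᵥ x) ≤ 1 ∧ (x ⬝ᵥ (V *ᵥ x) = 1 → V *ᵥ x = x) := by
  set d := x - V *ᵥ x with hd
  have hVx : (V *ᵥ x) ⬝ᵥ (V *ᵥ x) = 1 := by
    rw [dot_mulVec_left, mulVec_mulVec, hV, one_mulVec, hx]
  have hdd : d ⬝ᵥ d = 2 - 2 * (x ⬝ᵥ (V *ᵥ x)) := by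
    rw [hd, sub_dotProduct, dotProduct_sub, dotProduct_sub, hx, hVx,
      dotProduct_comm (V *ᵥ x) x]
    ring
  have h0 : 0 ≤ d ⬝ᵥ d := Finset.sum_nonneg fun i _ => mul_self_nonneg _
  constructor
  · linarith [h0, hdd.symm.le]
  · intro hc
    have : d ⬝ᵥ d = 0 := by rw [hdd, hc]; ring
    have hd0 : d = 0 := dotProduct_self_eq_zero.mp this
    have := sub_eq_zero.mp hd0
    exact this.symm

lemma trace_le (M W : Matrix (Fin n) (Fin n) ℝ) (hW : Wᵀ * W = 1) :
    trace (W * M) ≤ ∑ i, sval M i ∧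
      (trace (W * M) = ∑ i, sval M i → (W * M).PosSemidef) := by
  obtain ⟨W₀, hW₀, hS⟩ := polar M
  set E := bm (eb M) with hE
  set V := W * W₀ᵀ with hVdef
  have hW₀' : W₀ * W₀ᵀ = 1 := mul_eq_one_comm.mp hW₀
  have hV : Vᵀ * V = 1 := by
    rw [hVdef, transpose_mul, transpose_transpose, mul_assoc, ← mul_assoc Wᵀ,
      hW, one_mul, hW₀']
  have hWM : W * M = V * (E * diagonal (sval M) * Eᵀ) := by
    rw [← hS, hVdef, mul_assoc, ← mul_assoc W₀ᵀ, hW₀, one_mul]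
  set c : Fin n → ℝ := fun i => ⇑(eb M i) ⬝ᵥ (V *ᵥ ⇑(eb M i)) with hcdef
  have hc : ∀ i, c i ≤ 1 ∧ (c i = 1 → V *ᵥ ⇑(eb M i) = ⇑(eb M i)) := by
    intro i
    exact dot_V_le V hV _ (by rw [dot_b]; simp)
  have hdiag : ∀ i, (Eᵀ * V * E) i i = c i := by
    intro i
    simp only [mul_apply, transpose_apply, hcdef, dotProduct, mulVec, hE, bm,
      Finset.sum_mul, Finset.mul_sum]
    rw [Finset.sum_comm]
    refine Finset.sum_congr rfl fun k _ => Finset.sum_congr rfl fun l _ => by ring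
  have htr : trace (W * M) = ∑ i, c i * sval M i := by
    rw [hWM, ← mul_assoc, ← mul_assoc, trace_mul_comm, ← mul_assoc, ← mul_assoc,
      trace_mul_diagonal]
    exact Finset.sum_congr rfl fun i _ => by rw [hdiag]
  constructor
  · rw [htr]
    refine Finset.sum_le_sum fun i _ => ?_
    calc c i * sval M i ≤ 1 * sval M i :=
          mul_le_mul_of_nonneg_right (hc i).1 (sval_nonneg M i)
      _ = sval M i := one_mul _
  · intro heq
    have hzero : ∑ i, (1 - c i) * sval M i = 0 := by
      rw [htr] at heq
      have : ∑ i, (1 - c i) * sval M i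
          = ∑ i, sval M i - ∑ i, c i * sval M i := by
        rw [← Finset.sum_sub_distrib]
        exact Finset.sum_congr rfl fun i _ => by ring
      rw [this, ← heq, sub_self]
    have hterm : ∀ i ∈ Finset.univ, (1 - c i) * sval M i = 0 := by
      rw [← Finset.sum_eq_zero_iff_of_nonneg]
      · exact hzero
      · intro i _
        exact mul_nonneg (by linarith [(hc i).1]) (sval_nonneg M i)
    have hfix : ∀ j, sval M j ≠ 0 → V *ᵥ ⇑(eb M j) = ⇑(eb M j) := by
      intro j hj
      have := hterm j (Finset.mem_univ j)
      have hcj : c j = 1 := by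
        rcases mul_eq_zero.mp this with h1 | h2
        · linarith [h1]
        · exact absurd h2 hj
      exact (hc j).2 hcj
    have hVS : V * (E * diagonal (sval M) * Eᵀ) = E * diagonal (sval M) * Eᵀ := by
      apply ext_mulVec_eb M
      intro j
      rw [← mulVec_mulVec]
      rw [show (E * diagonal (sval M) * Eᵀ) *ᵥ ⇑(eb M j) = sval M j • ⇑(eb M j)
        from S_mulVec M j]
      by_cases hj : sval M j = 0
      · rw [hj, zero_smul, mulVec_zero]
      · rw [mulVec_smul, hfix j hj]
    rw [hWM, hVS]
    exact S_psd M

end SVAux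

lemma sumSingularValues_eq {n : ℕ} (M : Matrix (Fin n) (Fin n) ℝ) :
    sumSingularValues M = ∑ i, SVAux.sval M i := rfl

/-- Equality case in the subadditivity of the sum of singular values for real
matrices: there is a real orthogonal `P` with `P * A` and `P * B` both
positive semi-definite. -/
theorem eq_sumSingularValues_exists_orthogonal {n : ℕ} (A B : Matrix (Fin n) (Fin n) ℝ)
    (h : sumSingularValues (A + B) = sumSingularValues A + sumSingularValues B) :
    ∃ P : Matrix (Fin n) (Fin n) ℝ,
      Pᵀ * P = 1 ∧ (P * A).PosSemidef ∧ (P * B).PosSemidef := by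
  obtain ⟨W, hW, hS⟩ := SVAux.polar (A + B)
  have htrS : trace (W * (A + B)) = ∑ i, SVAux.sval (A + B) i := by
    rw [hS, SVAux.trace_S]
  have hA := SVAux.trace_le A W hW
  have hB := SVAux.trace_le B W hW
  have hsplit : trace (W * A) + trace (W * B)
      = ∑ i, SVAux.sval A i + ∑ i, SVAux.sval B i := by
    rw [← trace_add, ← mul_add, htrS, ← sumSingularValues_eq, h,
      sumSingularValues_eq, sumSingularValues_eq]
  have h1 : trace (W * A) = ∑ i, SVAux.sval A i :=
    le_antisymm hA.1 (by linarith [hB.1])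
  have h2 : trace (W * B) = ∑ i, SVAux.sval B i :=
    le_antisymm hB.1 (by linarith [hA.1])
  exact ⟨W, hW, hA.2 h1, hB.2 h2⟩
end

section
/- Let G be a simple graph on n vertices and ∅ ≠ S ⊊ V(G) with |S| = α. Then 2·E(G) ≤ E(G_S) + E(G_{V∖S}), where E(G) is the sum of absolute values of the eigenvalues of A(G), and E(G_S) is the sum of |λ − α/n| over the eigenvalues λ of A(G_S) = A(G) + D_S. -/
set_option linter.unusedSectionVars false

open Matrix Finset

/-- Diagonal 0/1 indicator matrix of the loop set `S`. -/
def loopDiag {V : Type} [Fintype V] [DecidableEq V] (S : Finset V) : Matrix V V ℝ :=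
  Matrix.diagonal (fun v => if v ∈ S then (1 : ℝ) else 0)

lemma adjMatrix_isHermitian {V : Type} [Fintype V] [DecidableEq V]
    (G : SimpleGraph V) [DecidableRel G.Adj] :
    (SimpleGraph.adjMatrix ℝ G).IsHermitian := by
  rw [Matrix.IsHermitian, conjTranspose_eq_transpose_of_trivial]
  exact G.isSymm_adjMatrix

lemma selfLoop_isHermitian {V : Type} [Fintype V] [DecidableEq V]
    (G : SimpleGraph V) [DecidableRel G.Adj] (S : Finset V) :
    (SimpleGraph.adjMatrix ℝ G + loopDiag S).IsHermitian :=
  (adjMatrix_isHermitian G).add (Matrix.isHermitian_diagonal _)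

/-- `∑ i, |λᵢ(M) - c|`, the eigenvalue sum of absolute deviations from `c`. -/
noncomputable def energyOf {V : Type} [Fintype V] [DecidableEq V]
    (M : Matrix V V ℝ) (hM : M.IsHermitian) (c : ℝ) : ℝ :=
  ∑ i, |hM.eigenvalues i - c|

/-- The energy of a simple graph: sum of absolute values of adjacency eigenvalues. -/
noncomputable def graphEnergy {V : Type} [Fintype V] [DecidableEq V]
    (G : SimpleGraph V) [DecidableRel G.Adj] : ℝ :=
  energyOf _ (adjMatrix_isHermitian G) 0

/-- The energy of the self-loop graph `G_S`: `∑ i, |λᵢ(A(G)+D_S) - |S|/n|`. -/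
noncomputable def selfLoopEnergy {V : Type} [Fintype V] [DecidableEq V]
    (G : SimpleGraph V) [DecidableRel G.Adj] (S : Finset V) : ℝ :=
  energyOf _ (selfLoop_isHermitian G S) ((S.card : ℝ) / (Fintype.card V))

section AuxEnergy
variable {V : Type} [Fintype V] [DecidableEq V]

lemma conj_diag_apply (W : Matrix V V ℝ) (s : V → ℝ) (i : V) :
    (W * diagonal s * star W) i i = ∑ j, s j * (W i j)^2 := by
  rw [Matrix.mul_apply]
  simp_rw [Matrix.mul_diagonal, Matrix.star_apply, star_trivial]
  exact Finset.sum_congr rfl fun j _ => by ring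

lemma conj_diag_abs_le (W : Matrix V V ℝ) (hW : W * star W = 1) (s : V → ℝ)
    (hs : ∀ j, |s j| ≤ 1) (i : V) : |(W * diagonal s * star W) i i| ≤ 1 := by
  rw [conj_diag_apply]
  calc |∑ j, s j * (W i j)^2| ≤ ∑ j, |s j * (W i j)^2| := Finset.abs_sum_le_sum_abs _ _
    _ ≤ ∑ j, (W i j)^2 := by
        refine Finset.sum_le_sum fun j _ => ?_
        rw [abs_mul, abs_pow, sq_abs]
        nlinarith [hs j, sq_nonneg (W i j), abs_nonneg (s j)]
    _ = (W * star W) i i := by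
        rw [Matrix.mul_apply]
        simp_rw [Matrix.star_apply, star_trivial]
        exact Finset.sum_congr rfl fun j _ => (sq _)
    _ = 1 := by rw [hW]; simp

lemma trace_mul_conj_diag (P U : Matrix V V ℝ) (d : V → ℝ) :
    trace (P * (U * diagonal d * star U)) = ∑ i, d i * ((star U * P * U) i i) := by
  have h1 : P * (U * diagonal d * star U) = (P * U * diagonal d) * star U := by
    simp only [Matrix.mul_assoc]
  rw [h1, Matrix.trace_mul_comm, ← Matrix.mul_assoc, ← Matrix.mul_assoc]
  simp only [Matrix.trace, Matrix.diag_apply]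
  exact Finset.sum_congr rfl fun i _ => by rw [Matrix.mul_diagonal, mul_comm]

lemma herm_shift (H : Matrix V V ℝ) (hH : H.IsHermitian) (c : ℝ) :
    H - c • 1 = (hH.eigenvectorUnitary : Matrix V V ℝ) *
      diagonal (fun i => hH.eigenvalues i - c) *
      star (hH.eigenvectorUnitary : Matrix V V ℝ) := by
  set U := (hH.eigenvectorUnitary : Matrix V V ℝ) with hU
  have hUU : U * star U = 1 := Matrix.mem_unitaryGroup_iff.mp hH.eigenvectorUnitary.2
  have hspec : H = U * diagonal (fun i => hH.eigenvalues i) * star U := by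
    have := hH.spectral_theorem
    simpa [RCLike.ofReal_real_eq_id, Function.comp] using this
  have hdiag : diagonal (fun i => hH.eigenvalues i - c)
      = diagonal (fun i => hH.eigenvalues i) - c • 1 := by
    ext i j
    by_cases h : i = j <;> simp [Matrix.diagonal_apply, Matrix.one_apply, h]
  rw [hdiag, Matrix.mul_sub, Matrix.sub_mul, ← hspec]
  congr 1
  simp [Matrix.mul_smul, Matrix.smul_mul, hUU]

lemma conjInvAux (U P : Matrix V V ℝ) (hUU' : star U * U = 1) :
    star U * (U * P * star U) * U = P := by
  calc star U * (U * P * star U) * U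
      = (star U * U) * P * (star U * U) := by simp only [Matrix.mul_assoc]
    _ = P := by rw [hUU', Matrix.one_mul, Matrix.mul_one]

lemma trace_le_energy (H : Matrix V V ℝ) (hH : H.IsHermitian) (c : ℝ)
    (W₀ : Matrix V V ℝ) (hW₀ : W₀ ∈ Matrix.unitaryGroup V ℝ) (s : V → ℝ)
    (hs : ∀ j, |s j| ≤ 1) :
    trace (W₀ * diagonal s * star W₀ * (H - c • 1)) ≤ ∑ i, |hH.eigenvalues i - c| := by
  set U := (hH.eigenvectorUnitary : Matrix V V ℝ) with hUdef
  rw [herm_shift H hH c, trace_mul_conj_diag]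
  set W := star U * W₀ with hWdef
  have hconj : star U * (W₀ * diagonal s * star W₀) * U = W * diagonal s * star W := by
    simp only [hWdef, StarMul.star_mul, star_star, Matrix.mul_assoc]
  have hWW : W * star W = 1 := by
    have h1 : W₀ * star W₀ = 1 := Matrix.mem_unitaryGroup_iff.mp hW₀
    have h2 : star U * U = 1 := Matrix.mem_unitaryGroup_iff'.mp hH.eigenvectorUnitary.2
    calc W * star W = star U * (W₀ * star W₀) * U := by
          simp only [hWdef, StarMul.star_mul, star_star, Matrix.mul_assoc]
      _ = 1 := by rw [h1, Matrix.mul_one, h2]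
  rw [hconj]
  refine Finset.sum_le_sum fun i _ => ?_
  have hb := conj_diag_abs_le W hWW s hs i
  calc (hH.eigenvalues i - c) * (W * diagonal s * star W) i i
      ≤ |(hH.eigenvalues i - c) * (W * diagonal s * star W) i i| := le_abs_self _
    _ = |hH.eigenvalues i - c| * |(W * diagonal s * star W) i i| := abs_mul _ _
    _ ≤ |hH.eigenvalues i - c| * 1 := mul_le_mul_of_nonneg_left hb (abs_nonneg _)
    _ = |hH.eigenvalues i - c| := mul_one _

lemma trace_eq_energy (A : Matrix V V ℝ) (hA : A.IsHermitian) :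
    trace ((hA.eigenvectorUnitary : Matrix V V ℝ) *
        diagonal (fun i => if 0 ≤ hA.eigenvalues i then (1:ℝ) else -1) *
        star (hA.eigenvectorUnitary : Matrix V V ℝ) * A)
      = ∑ i, |hA.eigenvalues i| := by
  set U := (hA.eigenvectorUnitary : Matrix V V ℝ) with hUdef
  set s : V → ℝ := fun i => if 0 ≤ hA.eigenvalues i then (1:ℝ) else -1 with hsdef
  have hA0 : A = U * diagonal (fun i => hA.eigenvalues i - 0) * star U := by
    have := herm_shift A hA 0
    simpa using this
  have h2 : star U * U = 1 := Matrix.mem_unitaryGroup_iff'.mp hA.eigenvectorUnitary.2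
  conv_lhs => rw [hA0]
  rw [trace_mul_conj_diag]
  have hinner : star U * (U * diagonal s * star U) * U = diagonal s := conjInvAux U _ h2
  rw [hinner]
  refine Finset.sum_congr rfl fun i _ => ?_
  rw [Matrix.diagonal_apply_eq, sub_zero, hsdef]
  by_cases h : 0 ≤ hA.eigenvalues i
  · simp [h, abs_of_nonneg h]
  · simp [h, abs_of_neg (lt_of_not_ge h)]


end AuxEnergy

/-- `2·E(G) ≤ E(G_S) + E(G_{V∖S})`. -/
theorem two_energy_le {V : Type} [Fintype V] [DecidableEq V]
    (G : SimpleGraph V) [DecidableRel G.Adj] (S : Finset V)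
    (hne : S.Nonempty) (hproper : S ≠ Finset.univ) :
    2 * graphEnergy G ≤ selfLoopEnergy G S + selfLoopEnergy G Sᶜ := by
  classical
  have hV : Nonempty V := ⟨hne.choose⟩
  have hn : (0:ℝ) < Fintype.card V := by exact_mod_cast Fintype.card_pos
  set A := SimpleGraph.adjMatrix ℝ G with hAdef
  set hA := adjMatrix_isHermitian G with hhA
  set s : V → ℝ := fun i => if 0 ≤ hA.eigenvalues i then (1:ℝ) else -1 with hsdef
  have hs : ∀ j, |s j| ≤ 1 := by
    intro j; by_cases h : 0 ≤ hA.eigenvalues j <;> simp [hsdef, h]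
  set U := (hA.eigenvectorUnitary : Matrix V V ℝ) with hUdef
  set P := U * diagonal s * star U with hPdef
  set c₁ : ℝ := (S.card : ℝ) / (Fintype.card V) with hc1
  set c₂ : ℝ := (Sᶜ.card : ℝ) / (Fintype.card V) with hc2
  have hc : c₁ + c₂ = 1 := by
    rw [hc1, hc2, ← add_div, div_eq_one_iff_eq hn.ne']
    rw [← Nat.cast_add]
    norm_cast
    rw [Finset.card_add_card_compl]
  have hD : loopDiag S + loopDiag Sᶜ = (1 : Matrix V V ℝ) := by
    ext i j
    by_cases hij : i = j
    · subst hij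
      by_cases h : i ∈ S <;>
        simp [loopDiag, Matrix.diagonal_apply_eq, Matrix.one_apply_eq, h]
    · simp [loopDiag, Matrix.diagonal_apply_ne _ hij, Matrix.one_apply_ne hij]
  have hsum : (A + loopDiag S - c₁ • 1) + (A + loopDiag Sᶜ - c₂ • 1) = A + A := by
    have h1 : (c₁ + c₂) • (1 : Matrix V V ℝ) = 1 := by rw [hc, one_smul]
    calc (A + loopDiag S - c₁ • 1) + (A + loopDiag Sᶜ - c₂ • 1)
        = (A + A) + (loopDiag S + loopDiag Sᶜ) - (c₁ • 1 + c₂ • 1) := by abel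
      _ = A + A := by rw [hD, ← add_smul, h1]; abel
  have hEq : trace (P * A) = ∑ i, |hA.eigenvalues i| := trace_eq_energy A hA
  have hle1 : trace (P * (A + loopDiag S - c₁ • 1)) ≤
      ∑ i, |(selfLoop_isHermitian G S).eigenvalues i - c₁| :=
    trace_le_energy (A + loopDiag S) (selfLoop_isHermitian G S) c₁ U hA.eigenvectorUnitary.2 s hs
  have hle2 : trace (P * (A + loopDiag Sᶜ - c₂ • 1)) ≤
      ∑ i, |(selfLoop_isHermitian G Sᶜ).eigenvalues i - c₂| :=
    trace_le_energy (A + loopDiag Sᶜ) (selfLoop_isHermitian G Sᶜ) c₂ U hA.eigenvectorUnitary.2 s hs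
  have hkey : trace (P * (A + loopDiag S - c₁ • 1)) + trace (P * (A + loopDiag Sᶜ - c₂ • 1))
      = 2 * ∑ i, |hA.eigenvalues i| := by
    rw [← Matrix.trace_add, ← Matrix.mul_add, hsum, Matrix.mul_add, Matrix.trace_add, hEq]
    ring
  have hE : graphEnergy G = ∑ i, |hA.eigenvalues i| := by
    simp [graphEnergy, energyOf, hhA]
  have hE1 : selfLoopEnergy G S = ∑ i, |(selfLoop_isHermitian G S).eigenvalues i - c₁| := rfl
  have hE2 : selfLoopEnergy G Sᶜ = ∑ i, |(selfLoop_isHermitian G Sᶜ).eigenvalues i - c₂| := rfl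
  rw [hE, hE1, hE2]
  linarith [hle1, hle2, hkey]
end

section
/- Let G be a simple graph on n vertices and ∅ ≠ S ⊊ V(G). If E(G_S) < E(G), then E(G_{V∖S}) > E(G); and if E(G_S) = E(G), then E(G_{V∖S}) ≥ E(G). -/
set_option linter.unusedSectionVars false

open Matrix Finset

section Aux

variable {n : Type} [Fintype n] [DecidableEq n]


variable {n : Type} [Fintype n] [DecidableEq n]

lemma row_sq_sum (W : Matrix n n ℝ) (hW : W ∈ Matrix.unitaryGroup n ℝ) (i : n) :
    ∑ j, (W i j)^2 = 1 := by
  have h := Matrix.mem_unitaryGroup_iff.mp hW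
  have h2 := congrFun (congrFun h i) i
  simp only [Matrix.mul_apply, Matrix.star_apply, star_trivial, Matrix.one_apply_eq] at h2
  calc ∑ j, (W i j)^2 = ∑ j, W i j * W i j := by simp [sq]
  _ = 1 := h2

lemma key_le (Vm Um : Matrix n n ℝ)
    (hV : Vm ∈ Matrix.unitaryGroup n ℝ) (hU : Um ∈ Matrix.unitaryGroup n ℝ)
    (μ s : n → ℝ) (hs : ∀ j, |s j| ≤ 1) :
    Matrix.trace (Vm * Matrix.diagonal μ * star Vm * (Um * Matrix.diagonal s * star Um))
      ≤ ∑ i, |μ i| := by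
  set W : Matrix n n ℝ := star Vm * Um with hWdef
  have hWu : W ∈ Matrix.unitaryGroup n ℝ := by
    rw [Matrix.mem_unitaryGroup_iff]
    have h1 : star Vm * Vm = 1 := Matrix.mem_unitaryGroup_iff'.mp hV
    have h2 : Um * star Um = 1 := Matrix.mem_unitaryGroup_iff.mp hU
    simp [hWdef, Matrix.mul_assoc]
    rw [← Matrix.mul_assoc Um, h2, Matrix.one_mul, h1]
  have htr : Matrix.trace (Vm * Matrix.diagonal μ * star Vm * (Um * Matrix.diagonal s * star Um))
      = Matrix.trace (Matrix.diagonal μ * (W * Matrix.diagonal s * star W)) := by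
    rw [show Vm * Matrix.diagonal μ * star Vm * (Um * Matrix.diagonal s * star Um)
        = Vm * (Matrix.diagonal μ * (star Vm * (Um * (Matrix.diagonal s * star Um)))) by
          simp only [Matrix.mul_assoc],
        Matrix.trace_mul_comm]
    congr 1
    simp only [hWdef, Matrix.star_mul, star_star, Matrix.mul_assoc]
  rw [htr]
  have hdiag : ∀ i, (W * Matrix.diagonal s * star W) i i = ∑ j, s j * (W i j)^2 := by
    intro i
    rw [Matrix.mul_apply]
    refine Finset.sum_congr rfl fun j _ => ?_
    rw [Matrix.mul_diagonal, Matrix.star_apply, star_trivial]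
    ring
  have htr2 : Matrix.trace (Matrix.diagonal μ * (W * Matrix.diagonal s * star W))
      = ∑ i, μ i * ∑ j, s j * (W i j)^2 := by
    simp [Matrix.trace, Matrix.diag, Matrix.diagonal_mul, hdiag]
  rw [htr2]
  apply Finset.sum_le_sum
  intro i _
  have habs : |∑ j, s j * (W i j)^2| ≤ 1 := by
    calc |∑ j, s j * (W i j)^2| ≤ ∑ j, |s j * (W i j)^2| := Finset.abs_sum_le_sum_abs _ _
    _ ≤ ∑ j, (W i j)^2 := by
        apply Finset.sum_le_sum
        intro j _
        rw [abs_mul, abs_of_nonneg (sq_nonneg (W i j))]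
        exact mul_le_of_le_one_left (sq_nonneg _) (hs j)
    _ = 1 := row_sq_sum W hWu i
  calc μ i * ∑ j, s j * (W i j)^2 ≤ |μ i * ∑ j, s j * (W i j)^2| := le_abs_self _
  _ = |μ i| * |∑ j, s j * (W i j)^2| := abs_mul _ _
  _ ≤ |μ i| * 1 := mul_le_mul_of_nonneg_left habs (abs_nonneg _)
  _ = |μ i| := mul_one _

lemma key_eq (Vm : Matrix n n ℝ) (hV : Vm ∈ Matrix.unitaryGroup n ℝ) (μ : n → ℝ) :
    Matrix.trace (Vm * Matrix.diagonal μ * star Vm *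
      (Vm * Matrix.diagonal (fun j => if 0 ≤ μ j then (1:ℝ) else -1) * star Vm))
      = ∑ i, |μ i| := by
  have h1 : star Vm * Vm = 1 := Matrix.mem_unitaryGroup_iff'.mp hV
  have h2 : Vm * star Vm = 1 := Matrix.mem_unitaryGroup_iff.mp hV
  set s : n → ℝ := fun j => if 0 ≤ μ j then (1:ℝ) else -1 with hs
  have hcollapse : Vm * Matrix.diagonal μ * star Vm * (Vm * Matrix.diagonal s * star Vm)
      = Vm * (Matrix.diagonal μ * Matrix.diagonal s) * star Vm := by
    rw [show Vm * Matrix.diagonal μ * star Vm * (Vm * Matrix.diagonal s * star Vm)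
        = Vm * Matrix.diagonal μ * (star Vm * Vm) * (Matrix.diagonal s * star Vm) by
          simp only [Matrix.mul_assoc], h1, Matrix.mul_one]
    simp only [Matrix.mul_assoc]
  rw [hcollapse, Matrix.diagonal_mul_diagonal, Matrix.trace_mul_comm,
    show star Vm * (Vm * Matrix.diagonal (fun i => μ i * s i)) = star Vm * Vm * Matrix.diagonal (fun i => μ i * s i) by
      simp only [Matrix.mul_assoc], h1, Matrix.one_mul, Matrix.trace_diagonal]
  refine Finset.sum_congr rfl fun i _ => ?_
  simp only [hs, Pi.mul_apply]
  by_cases h : 0 ≤ μ i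
  · simp [h, abs_of_nonneg h]
  · push_neg at h
    simp [not_le.mpr h, abs_of_neg h]

lemma spectral_real (M : Matrix n n ℝ) (hM : M.IsHermitian) :
    M = (hM.eigenvectorUnitary : Matrix n n ℝ) * Matrix.diagonal hM.eigenvalues
      * star (hM.eigenvectorUnitary : Matrix n n ℝ) := by
  have := hM.spectral_theorem
  simpa [RCLike.ofReal_real_eq_id] using this

lemma shift_decomp (M : Matrix n n ℝ) (hM : M.IsHermitian) (c : ℝ) :
    M - c • (1 : Matrix n n ℝ) = (hM.eigenvectorUnitary : Matrix n n ℝ)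
      * Matrix.diagonal (fun i => hM.eigenvalues i - c)
      * star (hM.eigenvectorUnitary : Matrix n n ℝ) := by
  set Vm : Matrix n n ℝ := (hM.eigenvectorUnitary : Matrix n n ℝ) with hVm
  have h2 : Vm * star Vm = 1 := Matrix.mem_unitaryGroup_iff.mp hM.eigenvectorUnitary.2
  have hD : Matrix.diagonal (fun i => hM.eigenvalues i - c)
      = Matrix.diagonal hM.eigenvalues - c • (1 : Matrix n n ℝ) := by
    ext i j
    by_cases h : i = j
    · subst h; simp [Matrix.diagonal_apply_eq, Matrix.one_apply_eq]
    · simp [Matrix.diagonal_apply_ne _ h, Matrix.one_apply_ne h]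
  rw [hD, Matrix.mul_sub, Matrix.sub_mul, ← spectral_real M hM]
  congr 1
  rw [Matrix.mul_smul, Matrix.mul_one, Matrix.smul_mul, h2]

lemma energy_trace_le (M : Matrix n n ℝ) (hM : M.IsHermitian) (c : ℝ)
    (Um : Matrix n n ℝ) (hU : Um ∈ Matrix.unitaryGroup n ℝ) (s : n → ℝ)
    (hs : ∀ j, |s j| ≤ 1) :
    Matrix.trace ((M - c • (1 : Matrix n n ℝ)) * (Um * Matrix.diagonal s * star Um))
      ≤ ∑ i, |hM.eigenvalues i - c| := by
  rw [shift_decomp M hM c]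
  exact key_le _ _ hM.eigenvectorUnitary.2 hU _ _ hs

end Aux

/-- If `E(G_S) < E(G)` then `E(G_{V∖S}) > E(G)`, and if `E(G_S) = E(G)` then
`E(G_{V∖S}) ≥ E(G)`. -/
theorem energy_complement {V : Type} [Fintype V] [DecidableEq V]
    (G : SimpleGraph V) [DecidableRel G.Adj] (S : Finset V)
    (hne : S.Nonempty) (hproper : S ≠ Finset.univ) :
    (selfLoopEnergy G S < graphEnergy G → graphEnergy G < selfLoopEnergy G Sᶜ) ∧
    (selfLoopEnergy G S = graphEnergy G → graphEnergy G ≤ selfLoopEnergy G Sᶜ) := by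
  have key : 2 * graphEnergy G ≤ selfLoopEnergy G S + selfLoopEnergy G Sᶜ := by
    set A : Matrix V V ℝ := SimpleGraph.adjMatrix ℝ G with hAdef
    have hA : A.IsHermitian := adjMatrix_isHermitian G
    have hVne : Nonempty V := ⟨hne.choose⟩
    have hn : (0:ℝ) < (Fintype.card V : ℝ) := by
      exact_mod_cast Fintype.card_pos
    set c₁ : ℝ := (S.card : ℝ) / (Fintype.card V) with hc₁
    set c₂ : ℝ := ((Sᶜ).card : ℝ) / (Fintype.card V) with hc₂
    have hc : c₁ + c₂ = 1 := by
      rw [hc₁, hc₂, Finset.card_compl, Nat.cast_sub (Finset.card_le_univ S)]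
      field_simp
      ring
    have hD : loopDiag S + loopDiag Sᶜ = (1 : Matrix V V ℝ) := by
      ext v w
      by_cases hvw : v = w
      · subst hvw
        by_cases h : v ∈ S <;>
          simp [loopDiag, Matrix.add_apply, Matrix.diagonal_apply_eq, Matrix.one_apply_eq, h]
      · simp [loopDiag, Matrix.add_apply, Matrix.diagonal_apply_ne _ hvw,
          Matrix.one_apply_ne hvw]
    set M₁ : Matrix V V ℝ := A + loopDiag S with hM₁def
    set M₂ : Matrix V V ℝ := A + loopDiag Sᶜ with hM₂def
    have hM₁ : M₁.IsHermitian := selfLoop_isHermitian G S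
    have hM₂ : M₂.IsHermitian := selfLoop_isHermitian G Sᶜ
    have hsum : (M₁ - c₁ • (1 : Matrix V V ℝ)) + (M₂ - c₂ • (1 : Matrix V V ℝ))
        = (2:ℝ) • A := by
      have h1 : (M₁ - c₁ • (1 : Matrix V V ℝ)) + (M₂ - c₂ • (1 : Matrix V V ℝ))
          = (A + A) + (loopDiag S + loopDiag Sᶜ) - (c₁ + c₂) • (1 : Matrix V V ℝ) := by
        rw [hM₁def, hM₂def, add_smul]
        abel
      rw [h1, hD, hc, one_smul, add_sub_cancel_right, two_smul]
    -- the dual certificate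
    set V0 : Matrix V V ℝ := (hA.eigenvectorUnitary : Matrix V V ℝ) with hV0
    set μ0 : V → ℝ := fun i => 2 * hA.eigenvalues i with hμ0
    set s0 : V → ℝ := fun j => if 0 ≤ μ0 j then (1:ℝ) else -1 with hs0
    have hs0le : ∀ j, |s0 j| ≤ 1 := by
      intro j
      rw [hs0]
      by_cases h : 0 ≤ μ0 j <;> simp [h]
    set X : Matrix V V ℝ := V0 * Matrix.diagonal s0 * star V0 with hX
    have h2A : (2:ℝ) • A = V0 * Matrix.diagonal μ0 * star V0 := by
      have hd : Matrix.diagonal μ0 = (2:ℝ) • Matrix.diagonal hA.eigenvalues := by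
        ext i j
        by_cases h : i = j
        · subst h; simp [hμ0]
        · simp [Matrix.diagonal_apply_ne _ h]
      rw [hd, Matrix.mul_smul, Matrix.smul_mul, ← spectral_real A hA]
    have htr_eq : Matrix.trace (((2:ℝ) • A) * X) = ∑ i, |μ0 i| := by
      rw [h2A, hX, hs0]
      exact key_eq V0 hA.eigenvectorUnitary.2 μ0
    have hsplit : Matrix.trace (((2:ℝ) • A) * X)
        = Matrix.trace ((M₁ - c₁ • (1 : Matrix V V ℝ)) * X)
          + Matrix.trace ((M₂ - c₂ • (1 : Matrix V V ℝ)) * X) := by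
      rw [← hsum, Matrix.add_mul, Matrix.trace_add]
    have hb1 : Matrix.trace ((M₁ - c₁ • (1 : Matrix V V ℝ)) * X)
        ≤ ∑ i, |hM₁.eigenvalues i - c₁| :=
      energy_trace_le M₁ hM₁ c₁ V0 hA.eigenvectorUnitary.2 s0 hs0le
    have hb2 : Matrix.trace ((M₂ - c₂ • (1 : Matrix V V ℝ)) * X)
        ≤ ∑ i, |hM₂.eigenvalues i - c₂| :=
      energy_trace_le M₂ hM₂ c₂ V0 hA.eigenvectorUnitary.2 s0 hs0le
    have hE0 : 2 * graphEnergy G = ∑ i, |μ0 i| := by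
      rw [graphEnergy, energyOf, Finset.mul_sum]
      refine Finset.sum_congr rfl fun i _ => ?_
      rw [hμ0, sub_zero, abs_mul]
      norm_num
    have hE1 : selfLoopEnergy G S = ∑ i, |hM₁.eigenvalues i - c₁| := rfl
    have hE2 : selfLoopEnergy G Sᶜ = ∑ i, |hM₂.eigenvalues i - c₂| := rfl
    rw [hE0, hE1, hE2, ← htr_eq, hsplit]
    exact add_le_add hb1 hb2
  constructor
  · intro h; linarith
  · intro h; linarith
end

section
/- Let G be a simple graph containing a connected component H with at least 2 vertices, and let S be a nonempty independent set of vertices of H. Then E(G_S) > E(G) or E(G_{V(G)∖S}) > E(G). -/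
set_option linter.unusedSectionVars false

open Matrix Finset

section EnergyHelpers
variable {V : Type} [Fintype V] [DecidableEq V]

lemma trace_diagonal_mul' (d : V → ℝ) (X : Matrix V V ℝ) :
    (Matrix.diagonal d * X).trace = ∑ i, d i * X i i := by
  simp [Matrix.trace, Matrix.diag, Matrix.mul_apply, Matrix.diagonal_apply, Finset.sum_ite_eq]

lemma psd_diag_nonneg {N : Matrix V V ℝ} (hN : N.PosSemidef) (i : V) : 0 ≤ N i i := by
  have := hN.dotProduct_mulVec_nonneg (Pi.single i 1)
  simpa [Matrix.mulVec_single, single_dotProduct] using this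

lemma psd_row_zero {N : Matrix V V ℝ} (hN : N.PosSemidef) {i : V} (h : N i i = 0) (j : V) :
    N i j = 0 := by
  have hsymm : ∀ a b, N a b = N b a := by
    intro a b
    have := congrFun (congrFun hN.1 a) b
    simpa [Matrix.conjTranspose_apply] using this.symm
  have key : ∀ t : ℝ, 0 ≤ N j j + 2 * t * N i j := by
    intro t
    have h2 := hN.dotProduct_mulVec_nonneg ((Pi.single j 1 : V → ℝ) + t • (Pi.single i 1 : V → ℝ))
    simp only [star_trivial, Matrix.mulVec_add, Matrix.mulVec_smul, Matrix.mulVec_single,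
      dotProduct_add, add_dotProduct, smul_dotProduct, dotProduct_smul,
      single_dotProduct, smul_eq_mul, mul_one, Pi.add_apply, Pi.smul_apply,
      MulOpposite.op_one, one_smul, one_mul, Matrix.col_apply] at h2
    rw [hsymm j i] at h2
    simp only [one_mul, h, mul_zero, add_zero] at h2
    linarith
  by_contra hb
  have h1 := key (-(N j j + 1) / (2 * N i j))
  have heq : 2 * (-(N j j + 1) / (2 * N i j)) * N i j = -(N j j + 1) := by
    field_simp
  rw [heq] at h1
  linarith


lemma abs_bound {a q : ℝ} (h0 : 0 ≤ q) (h1 : q ≤ 1) : a * (2 * q - 1) ≤ |a| := by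
  nlinarith [le_abs_self a, neg_abs_le a,
    mul_nonneg (sub_nonneg.2 (le_abs_self a)) (by linarith : (0:ℝ) ≤ 1 - (2*q-1)),
    mul_nonneg (by linarith [neg_abs_le a] : (0:ℝ) ≤ |a| + a) (by linarith : (0:ℝ) ≤ 1 + (2*q-1))]

lemma sum_id_test (f g : V → ℝ) (hle : ∀ i, f i ≤ g i) (he : ∑ i, f i = ∑ i, g i) (i : V) :
    f i = g i := by
  by_contra hne
  rcases (isEmpty_or_nonempty V) with h | h
  · exact hne (congrFun (Subsingleton.elim f g) i)
  · have := Finset.sum_lt_sum (fun j _ => hle j) ⟨i, Finset.mem_univ i, lt_of_le_of_ne (hle i) hne⟩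
    linarith
section spectral
variable {M : Matrix V V ℝ} (hM : M.IsHermitian)

lemma spec_real : M = (hM.eigenvectorUnitary : Matrix V V ℝ) * Matrix.diagonal hM.eigenvalues
    * star (hM.eigenvectorUnitary : Matrix V V ℝ) := by
  have := hM.spectral_theorem
  simpa [RCLike.ofReal_real_eq_id] using this

lemma unit_mul : (hM.eigenvectorUnitary : Matrix V V ℝ) * star (hM.eigenvectorUnitary : Matrix V V ℝ) = 1 :=
  Matrix.mem_unitaryGroup_iff.mp hM.eigenvectorUnitary.2

lemma unit_mul' : star (hM.eigenvectorUnitary : Matrix V V ℝ) * (hM.eigenvectorUnitary : Matrix V V ℝ) = 1 :=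
  Matrix.mem_unitaryGroup_iff'.mp hM.eigenvectorUnitary.2

lemma trace_conj_eq (Q : Matrix V V ℝ) :
    (star (hM.eigenvectorUnitary : Matrix V V ℝ) * Q * (hM.eigenvectorUnitary : Matrix V V ℝ)).trace = Q.trace := by
  rw [Matrix.trace_mul_cycle, unit_mul hM, Matrix.one_mul]

lemma trace_mul_eq_sum (Q : Matrix V V ℝ) :
    (M * Q).trace = ∑ i, hM.eigenvalues i *
      ((star (hM.eigenvectorUnitary : Matrix V V ℝ) * Q * (hM.eigenvectorUnitary : Matrix V V ℝ)) i i) := by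
  set U := (hM.eigenvectorUnitary : Matrix V V ℝ) with hUdef
  conv_lhs => rw [spec_real hM]
  have h1 : U * Matrix.diagonal hM.eigenvalues * star U * Q
      = U * (Matrix.diagonal hM.eigenvalues * (star U * Q)) := by
    simp [Matrix.mul_assoc]
  rw [h1, Matrix.trace_mul_comm, Matrix.mul_assoc, trace_diagonal_mul']

lemma trace_eq_sum_eig : M.trace = ∑ i, hM.eigenvalues i := by
  have := trace_mul_eq_sum hM 1
  rw [Matrix.mul_one] at this
  rw [this]
  congr 1
  funext i
  rw [Matrix.mul_one, unit_mul' hM]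
  simp

lemma conj_psd {Q : Matrix V V ℝ} (hQ : Q.PosSemidef) :
    (star (hM.eigenvectorUnitary : Matrix V V ℝ) * Q * (hM.eigenvectorUnitary : Matrix V V ℝ)).PosSemidef := by
  have := hQ.conjTranspose_mul_mul_same (hM.eigenvectorUnitary : Matrix V V ℝ)
  simpa [Matrix.star_eq_conjTranspose] using this

lemma conj_one_sub {Q : Matrix V V ℝ} :
    star (hM.eigenvectorUnitary : Matrix V V ℝ) * (1 - Q) * (hM.eigenvectorUnitary : Matrix V V ℝ)
    = 1 - star (hM.eigenvectorUnitary : Matrix V V ℝ) * Q * (hM.eigenvectorUnitary : Matrix V V ℝ) := by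
  rw [Matrix.mul_sub, Matrix.sub_mul, Matrix.mul_one, unit_mul' hM]

end spectral

section core
variable {M : Matrix V V ℝ} (hM : M.IsHermitian)

lemma lb_identity (c : ℝ) (Q : Matrix V V ℝ) :
    2 * ((M * Q).trace - c * Q.trace) - M.trace + c * (Fintype.card V)
      = ∑ i, (hM.eigenvalues i - c) *
        (2 * ((star (hM.eigenvectorUnitary : Matrix V V ℝ) * Q * (hM.eigenvectorUnitary : Matrix V V ℝ)) i i) - 1) := by
  set q : V → ℝ := fun i =>
    (star (hM.eigenvectorUnitary : Matrix V V ℝ) * Q * (hM.eigenvectorUnitary : Matrix V V ℝ)) i i with hq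
  have h1 : (M * Q).trace = ∑ i, hM.eigenvalues i * q i := trace_mul_eq_sum hM Q
  have h2 : Q.trace = ∑ i, q i := by
    rw [← trace_conj_eq hM Q]; rfl
  have h3 : M.trace = ∑ i, hM.eigenvalues i := trace_eq_sum_eig hM
  rw [h1, h2, h3]
  have : ∀ i, (hM.eigenvalues i - c) * (2 * q i - 1)
      = 2 * (hM.eigenvalues i * q i) - 2 * (c * q i) - hM.eigenvalues i + c := fun i => by ring
  rw [Finset.sum_congr rfl (fun i _ => this i)]
  simp only [Finset.sum_add_distrib, Finset.sum_sub_distrib, ← Finset.mul_sum,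
    Finset.sum_const, Finset.card_univ, nsmul_eq_mul, mul_comm]
  ring

lemma diag01 {Q : Matrix V V ℝ} (hQ : Q.PosSemidef) (hQ1 : (1 - Q).PosSemidef) (i : V) :
    0 ≤ (star (hM.eigenvectorUnitary : Matrix V V ℝ) * Q * (hM.eigenvectorUnitary : Matrix V V ℝ)) i i
    ∧ (star (hM.eigenvectorUnitary : Matrix V V ℝ) * Q * (hM.eigenvectorUnitary : Matrix V V ℝ)) i i ≤ 1 := by
  constructor
  · exact psd_diag_nonneg (conj_psd hM hQ) i
  · have h := psd_diag_nonneg (conj_psd hM hQ1) i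
    rw [conj_one_sub hM] at h
    have : (1 - star (hM.eigenvectorUnitary : Matrix V V ℝ) * Q * (hM.eigenvectorUnitary : Matrix V V ℝ)) i i
        = 1 - (star (hM.eigenvectorUnitary : Matrix V V ℝ) * Q * (hM.eigenvectorUnitary : Matrix V V ℝ)) i i := by
      simp [Matrix.sub_apply, Matrix.one_apply_eq]
    linarith [h, this ▸ h]

lemma energy_lower_bound (c : ℝ) {Q : Matrix V V ℝ} (hQ : Q.PosSemidef) (hQ1 : (1 - Q).PosSemidef) :
    2 * ((M * Q).trace - c * Q.trace) - M.trace + c * (Fintype.card V)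
      ≤ ∑ i, |hM.eigenvalues i - c| := by
  rw [lb_identity hM c Q]
  exact Finset.sum_le_sum fun i _ =>
    abs_bound (diag01 hM hQ hQ1 i).1 (diag01 hM hQ hQ1 i).2

lemma mul_comm_of_energy_eq (c : ℝ) {Q : Matrix V V ℝ} (hQ : Q.PosSemidef) (hQ1 : (1 - Q).PosSemidef)
    (heq : 2 * ((M * Q).trace - c * Q.trace) - M.trace + c * (Fintype.card V)
      = ∑ i, |hM.eigenvalues i - c|) :
    M * Q = Q * M := by
  set U := (hM.eigenvectorUnitary : Matrix V V ℝ) with hU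
  set Q' := star U * Q * U with hQ'
  set lam := hM.eigenvalues with hlam
  have hle : ∀ i, (lam i - c) * (2 * Q' i i - 1) ≤ |lam i - c| := fun i =>
    abs_bound (diag01 hM hQ hQ1 i).1 (diag01 hM hQ hQ1 i).2
  have hsum : ∑ i, (lam i - c) * (2 * Q' i i - 1) = ∑ i, |lam i - c| := by
    rw [← lb_identity hM c Q]; exact heq
  have hall : ∀ i, (lam i - c) * (2 * Q' i i - 1) = |lam i - c| :=
    fun i => sum_id_test _ _ hle hsum i
  have hQ'psd : Q'.PosSemidef := conj_psd hM hQ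
  have hQ'1psd : (1 - Q').PosSemidef := by
    have := conj_psd hM hQ1; rwa [conj_one_sub hM] at this
  have hq1 : ∀ i, c < lam i → Q' i i = 1 := by
    intro i hi
    have h := hall i
    rw [abs_of_pos (by linarith : (0:ℝ) < lam i - c)] at h
    have h2 : (lam i - c) * (2 * Q' i i - 1) = (lam i - c) * 1 := by rw [h]; ring
    have := mul_left_cancel₀ (by linarith : lam i - c ≠ 0) h2
    linarith
  have hq0 : ∀ i, lam i < c → Q' i i = 0 := by
    intro i hi
    have h := hall i
    rw [abs_of_neg (by linarith : lam i - c < 0)] at h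
    have h2 : (lam i - c) * (2 * Q' i i - 1) = (lam i - c) * (-1) := by rw [h]; ring
    have := mul_left_cancel₀ (by linarith : lam i - c ≠ 0) h2
    linarith
  have hrow1 : ∀ i, c < lam i → ∀ j, Q' i j = (1 : Matrix V V ℝ) i j := by
    intro i hi j
    have hz : (1 - Q') i i = 0 := by
      simp [Matrix.sub_apply, Matrix.one_apply_eq, hq1 i hi]
    have h := psd_row_zero hQ'1psd hz j
    have : (1 : Matrix V V ℝ) i j - Q' i j = 0 := by
      simpa [Matrix.sub_apply] using h
    linarith [this]
  have hrow0 : ∀ i, lam i < c → ∀ j, Q' i j = 0 := fun i hi j =>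
    psd_row_zero hQ'psd (hq0 i hi) j
  have hsymQ' : ∀ a b, Q' a b = Q' b a := by
    intro a b
    have := congrFun (congrFun hQ'psd.1 a) b
    simpa [Matrix.conjTranspose_apply] using this.symm
  have hzero : ∀ i j, lam i ≠ lam j → Q' i j = 0 := by
    intro i j hne
    have hij : i ≠ j := fun h => hne (by rw [h])
    rcases lt_trichotomy (lam i) c with h | h | h
    · exact hrow0 i h j
    · rcases lt_trichotomy (lam j) c with h2 | h2 | h2
      · rw [hsymQ' i j]; exact hrow0 j h2 i
      · exact absurd (h.trans h2.symm) hne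
      · rw [hsymQ' i j, hrow1 j h2 i, Matrix.one_apply_ne hij.symm]
    · rw [hrow1 i h j, Matrix.one_apply_ne hij]
  have hcomm : Q' * Matrix.diagonal lam = Matrix.diagonal lam * Q' := by
    ext i j
    rw [Matrix.mul_diagonal, Matrix.diagonal_mul]
    by_cases h : lam i = lam j
    · rw [h]; ring
    · rw [hzero i j h]; ring
  have hQdecomp : Q = U * Q' * star U := by
    rw [hQ']
    calc Q = (U * star U) * Q * (U * star U) := by rw [unit_mul hM]; simp
    _ = U * (star U * Q * U) * star U := by simp only [Matrix.mul_assoc]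
  have hDQ : Matrix.diagonal lam * (Q' * star U) = Q' * (Matrix.diagonal lam * star U) := by
    rw [← Matrix.mul_assoc, ← hcomm, Matrix.mul_assoc]
  conv_lhs => rw [spec_real hM, hQdecomp]
  conv_rhs => rw [spec_real hM, hQdecomp]
  simp only [Matrix.mul_assoc]
  rw [show star U * (U * (Q' * star U)) = Q' * star U by
      rw [← Matrix.mul_assoc, unit_mul' hM, Matrix.one_mul],
    show star U * (U * (Matrix.diagonal hM.eigenvalues * star U)) = Matrix.diagonal hM.eigenvalues * star U by
      rw [← Matrix.mul_assoc, unit_mul' hM, Matrix.one_mul]]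
  rw [← hlam, hDQ]
end core

section main
variable (G : SimpleGraph V) [DecidableRel G.Adj]

-- notation shortcuts
noncomputable def lamG := (adjMatrix_isHermitian G).eigenvalues
noncomputable def UG : Matrix V V ℝ := ((adjMatrix_isHermitian G).eigenvectorUnitary : Matrix V V ℝ)
noncomputable def gG : V → ℝ := fun i => if 0 < lamG G i then 1 else 0
noncomputable def PG : Matrix V V ℝ := UG G * Matrix.diagonal (gG G) * star (UG G)

lemma lamG_def : lamG G = (adjMatrix_isHermitian G).eigenvalues := rfl

lemma UG_def : UG G = ((adjMatrix_isHermitian G).eigenvectorUnitary : Matrix V V ℝ) := rfl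

lemma PG_psd : (PG G).PosSemidef := by
  have hd : Matrix.PosSemidef (Matrix.diagonal (gG G)) := by
    refine Matrix.PosSemidef.diagonal ?_
    intro i
    unfold gG
    split <;> norm_num
  have := hd.mul_mul_conjTranspose_same (UG G)
  simpa [PG, Matrix.star_eq_conjTranspose] using this

lemma PG_conj : star (UG G) * PG G * UG G = Matrix.diagonal (gG G) := by
  unfold PG
  simp only [← Matrix.mul_assoc]
  rw [UG_def, unit_mul' (adjMatrix_isHermitian G)]
  simp only [Matrix.one_mul, Matrix.mul_assoc]
  rw [unit_mul' (adjMatrix_isHermitian G), Matrix.mul_one]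

lemma PG_one_sub_psd : (1 - PG G).PosSemidef := by
  have h1 : (1 : Matrix V V ℝ) - PG G
      = UG G * Matrix.diagonal (fun i => 1 - gG G i) * star (UG G) := by
    rw [show Matrix.diagonal (fun i => 1 - gG G i) = 1 - Matrix.diagonal (gG G) from by
      ext i j; by_cases h : i = j <;> simp [h, Matrix.diagonal_apply, Matrix.one_apply]]
    unfold PG
    rw [Matrix.mul_sub, Matrix.sub_mul, Matrix.mul_one, UG_def,
      unit_mul (adjMatrix_isHermitian G)]
  rw [h1]
  have hd : Matrix.PosSemidef (Matrix.diagonal (fun i => 1 - gG G i)) := by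
    refine Matrix.PosSemidef.diagonal ?_
    intro i
    simp only [gG]
    split <;> norm_num
  have := hd.mul_mul_conjTranspose_same (UG G)
  simpa [Matrix.star_eq_conjTranspose] using this

lemma PG_trace : (PG G).trace = ∑ i, gG G i := by
  rw [← trace_conj_eq (adjMatrix_isHermitian G) (PG G), ← UG_def, PG_conj, Matrix.trace_diagonal]

lemma AP_trace : (SimpleGraph.adjMatrix ℝ G * PG G).trace = ∑ i, lamG G i * gG G i := by
  rw [trace_mul_eq_sum (adjMatrix_isHermitian G) (PG G)]
  refine Finset.sum_congr rfl fun i _ => ?_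
  rw [← UG_def, PG_conj]
  simp [Matrix.diagonal_apply_eq, lamG]

lemma lam_sum_zero : ∑ i, lamG G i = 0 := by
  have := trace_eq_sum_eig (adjMatrix_isHermitian G)
  rw [SimpleGraph.trace_adjMatrix] at this
  exact this.symm
end main

section main2
variable (G : SimpleGraph V) [DecidableRel G.Adj]

lemma energy_expr : ∑ i, |lamG G i - 0| = 2 * (∑ i, lamG G i * gG G i) - ∑ i, lamG G i := by
  have : ∀ i, |lamG G i - 0| = 2 * (lamG G i * gG G i) - lamG G i := by
    intro i
    unfold gG
    by_cases h : 0 < lamG G i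
    · rw [if_pos h, abs_of_pos (by simpa using h)]; ring
    · rw [if_neg h, abs_of_nonpos (by simpa using not_lt.mp h)]; ring
  rw [Finset.sum_congr rfl fun i _ => this i, Finset.sum_sub_distrib, ← Finset.mul_sum]

lemma loopDiag_trace (S : Finset V) : (loopDiag S).trace = S.card := by
  unfold loopDiag
  rw [Matrix.trace_diagonal]
  simp [Finset.sum_ite_mem, Finset.univ_inter]

lemma loopDiag_compl (S : Finset V) : loopDiag Sᶜ = 1 - loopDiag S := by
  unfold loopDiag
  ext i j
  by_cases h : i = j
  · subst h
    by_cases hs : i ∈ S <;> simp [Matrix.diagonal_apply_eq, Matrix.one_apply_eq, hs]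
  · simp [Matrix.diagonal_apply_ne _ h, Matrix.one_apply_ne h]

end main2

lemma final_contra (G : SimpleGraph V) [DecidableRel G.Adj] (S : Finset V) (s : V) (hs : s ∈ S)
    (w : V) (hadj : G.Adj s w) (hindep : ∀ u ∈ S, ∀ v ∈ S, ¬ G.Adj u v)
    (hDP : loopDiag S * PG G = PG G * loopDiag S) : False := by
  set A := SimpleGraph.adjMatrix ℝ G with hA
  have hspec : A = UG G * Matrix.diagonal (lamG G) * star (UG G) := by
    rw [UG_def]
    exact spec_real (adjMatrix_isHermitian G)
  have hstarU : star (UG G) = (UG G)ᵀ := by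
    rw [Matrix.star_eq_conjTranspose, conjTranspose_eq_transpose_of_trivial]
  have hentry : ∀ x y, A x y = ∑ i, lamG G i * UG G x i * UG G y i := by
    intro x y
    conv_lhs => rw [hspec]
    rw [Matrix.mul_apply]
    refine Finset.sum_congr rfl fun j _ => ?_
    rw [Matrix.mul_diagonal, hstarU, Matrix.transpose_apply]
    ring
  have hAss : A s s = 0 := by simp [hA]
  have hAsw : A s w = 1 := by simp [hA, hadj]
  have hk : ∃ k, 0 < lamG G k ∧ UG G s k ≠ 0 := by
    by_contra hno
    push_neg at hno
    have hterm : ∀ i, lamG G i * UG G s i * UG G s i ≤ 0 := by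
      intro i
      by_cases h : 0 < lamG G i
      · rw [hno i h]; simp
      · nlinarith [mul_self_nonneg (UG G s i), not_lt.mp h]
    have hsum0 : ∑ i, lamG G i * UG G s i * UG G s i = 0 := by
      rw [← hentry s s, hAss]
    have hzero : ∀ i, lamG G i * UG G s i = 0 := by
      intro i
      have h0 := (Finset.sum_eq_zero_iff_of_nonpos (fun i _ => hterm i)).mp hsum0 i
        (Finset.mem_univ i)
      rcases mul_eq_zero.mp h0 with h' | h'
      · exact h'
      · rw [h', mul_zero]
    have : A s w = 0 := by
      rw [hentry s w]
      refine Finset.sum_eq_zero fun i _ => ?_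
      rw [hzero i, zero_mul]
    rw [hAsw] at this; norm_num at this
  obtain ⟨k, hk1, hk2⟩ := hk
  set w0 : V → ℝ := fun v => UG G v k with hw0
  set ψ : V → ℝ := (loopDiag S) *ᵥ w0 with hψ
  have hψ_eq : ∀ v, ψ v = if v ∈ S then UG G v k else 0 := by
    intro v
    rw [hψ]
    unfold loopDiag
    rw [Matrix.mulVec_diagonal]
    by_cases hv : v ∈ S <;> simp [hv, hw0]
  have hUsingle : UG G *ᵥ Pi.single k 1 = w0 := by
    rw [Matrix.mulVec_single]
    funext v
    simp [hw0]
  have hPU : PG G * UG G = UG G * Matrix.diagonal (gG G) := by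
    unfold PG
    rw [Matrix.mul_assoc, Matrix.mul_assoc, UG_def, unit_mul' (adjMatrix_isHermitian G),
      Matrix.mul_one]
  have hPw0 : PG G *ᵥ w0 = w0 := by
    rw [← hUsingle, Matrix.mulVec_mulVec, hPU, ← Matrix.mulVec_mulVec,
      Matrix.diagonal_mulVec_single]
    have hg : gG G k = 1 := if_pos hk1
    rw [hg, one_mul]
  have hPψ : PG G *ᵥ ψ = ψ := by
    rw [hψ, Matrix.mulVec_mulVec, ← hDP, ← Matrix.mulVec_mulVec, hPw0]
  set cv : V → ℝ := star (UG G) *ᵥ ψ with hcv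
  have hUP : star (UG G) * PG G = Matrix.diagonal (gG G) * star (UG G) := by
    unfold PG
    rw [← Matrix.mul_assoc, ← Matrix.mul_assoc, UG_def, unit_mul' (adjMatrix_isHermitian G),
      Matrix.one_mul]
  have hcg : ∀ i, ¬ (0 < lamG G i) → cv i = 0 := by
    intro i hi
    have h2 : cv = Matrix.diagonal (gG G) *ᵥ cv := by
      conv_lhs => rw [hcv, ← hPψ, Matrix.mulVec_mulVec, hUP, ← Matrix.mulVec_mulVec, ← hcv]
    have h3 := congrFun h2 i
    rw [Matrix.mulVec_diagonal] at h3
    have hg : gG G i = 0 := if_neg hi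
    rw [hg, zero_mul] at h3
    exact h3
  have hUUT : UG G * star (UG G) = 1 := by rw [UG_def]; exact unit_mul (adjMatrix_isHermitian G)
  have hvmul : ψ ᵥ* UG G = cv := by
    rw [hcv, hstarU, Matrix.mulVec_transpose]
  have hdotU : ∀ z : V → ℝ, ψ ⬝ᵥ (UG G *ᵥ z) = cv ⬝ᵥ z := by
    intro z
    rw [Matrix.dotProduct_mulVec, hvmul]
  have hUcv : UG G *ᵥ cv = ψ := by
    rw [hcv, Matrix.mulVec_mulVec, hUUT, Matrix.one_mulVec]
  have hdot1 : cv ⬝ᵥ cv = ψ ⬝ᵥ ψ := by rw [← hdotU cv, hUcv]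
  have hAψ : A *ᵥ ψ = UG G *ᵥ (Matrix.diagonal (lamG G) *ᵥ cv) := by
    conv_rhs => rw [hcv, Matrix.mulVec_mulVec, Matrix.mulVec_mulVec]
    conv_lhs => rw [hspec]
  have hquadA : ψ ⬝ᵥ (A *ᵥ ψ) = ∑ i, lamG G i * cv i ^ 2 := by
    rw [hAψ, hdotU]
    simp only [dotProduct, Matrix.mulVec_diagonal]
    exact Finset.sum_congr rfl fun i _ => by ring
  have hquad0 : ψ ⬝ᵥ (A *ᵥ ψ) = 0 := by
    simp only [dotProduct, Matrix.mulVec]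
    refine Finset.sum_eq_zero fun u _ => ?_
    by_cases hu : u ∈ S
    · have hinner : ∑ v, A u v * ψ v = 0 := by
        refine Finset.sum_eq_zero fun v _ => ?_
        by_cases hv : v ∈ S
        · have : A u v = 0 := by simp [hA, hindep u hu v hv]
          rw [this, zero_mul]
        · rw [hψ_eq v, if_neg hv, mul_zero]
      rw [hinner, mul_zero]
    · rw [hψ_eq u, if_neg hu, zero_mul]
  have hψs : ψ s ≠ 0 := by rw [hψ_eq s, if_pos hs]; exact hk2
  have hpos1 : 0 < ψ ⬝ᵥ ψ := by
    simp only [dotProduct]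
    refine Finset.sum_pos' (fun v _ => mul_self_nonneg _) ⟨s, Finset.mem_univ s, ?_⟩
    exact mul_self_pos.mpr hψs
  have hpos2 : 0 < cv ⬝ᵥ cv := hdot1 ▸ hpos1
  have hex : ∃ i, cv i ≠ 0 := by
    by_contra h
    push_neg at h
    have hz : cv ⬝ᵥ cv = 0 := by simp [dotProduct, h]
    rw [hz] at hpos2
    exact lt_irrefl _ hpos2
  obtain ⟨i0, hi0⟩ := hex
  have hlami0 : 0 < lamG G i0 := by
    by_contra h
    exact hi0 (hcg i0 h)
  have hposS : 0 < ∑ i, lamG G i * cv i ^ 2 := by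
    refine Finset.sum_pos' (fun i _ => ?_) ⟨i0, Finset.mem_univ i0, ?_⟩
    · by_cases h : 0 < lamG G i
      · exact mul_nonneg h.le (sq_nonneg _)
      · rw [hcg i h]; simp
    · exact mul_pos hlami0 (by positivity)
  rw [hquadA] at hquad0
  linarith

lemma arith_core (nR σ W T p ES EC : ℝ) (hn : 0 < nR)
    (h1 : 2*((W+T) - σ/nR*p) - σ + σ/nR*nR ≤ ES)
    (h2 : 2*((W+(p-T)) - (nR-σ)/nR*p) - (nR-σ) + (nR-σ)/nR*nR ≤ EC)
    (h3 : ES ≤ 2*W) (h4 : EC ≤ 2*W) :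
    2*((W+T) - σ/nR*p) - σ + σ/nR*nR = 2*W
    ∧ 2*((W+(p-T)) - (nR-σ)/nR*p) - (nR-σ) + (nR-σ)/nR*nR = 2*W
    ∧ ES = 2*W ∧ EC = 2*W := by
  have hd1 : σ/nR*nR = σ := div_mul_cancel₀ _ (ne_of_gt hn)
  have hd2 : (nR-σ)/nR*nR = nR-σ := div_mul_cancel₀ _ (ne_of_gt hn)
  have hd3 : (nR-σ)/nR*p = p - σ/nR*p := by
    field_simp
  refine ⟨by linarith, by linarith, by linarith, by linarith⟩


end EnergyHelpers

/-- If `S` is a nonempty independent set inside a connected component with at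
least two vertices, then `E(G_S) > E(G)` or `E(G_{V∖S}) > E(G)`. -/
theorem energy_gt_of_indep {V : Type} [Fintype V] [DecidableEq V]
    (G : SimpleGraph V) [DecidableRel G.Adj] (c : G.ConnectedComponent)
    (hc : 2 ≤ c.supp.ncard) (S : Finset V) (hne : S.Nonempty)
    (hsub : ↑S ⊆ c.supp)
    (hindep : ∀ u ∈ S, ∀ v ∈ S, ¬ G.Adj u v) :
    graphEnergy G < selfLoopEnergy G S ∨ graphEnergy G < selfLoopEnergy G Sᶜ := by
  classical
  by_contra hcon
  push_neg at hcon
  obtain ⟨hS, hSc⟩ := hcon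
  obtain ⟨s, hs⟩ := hne
  have hsupp : s ∈ c.supp := hsub hs
  have hxw : ∃ w, G.Adj s w := by
    obtain ⟨w, hw, hws⟩ := Set.exists_ne_of_one_lt_ncard (by omega : 1 < c.supp.ncard) s
    have hreach : G.Reachable s w := by
      rw [SimpleGraph.ConnectedComponent.mem_supp_iff] at hw hsupp
      exact (SimpleGraph.ConnectedComponent.eq).mp (hsupp.trans hw.symm)
    obtain ⟨pth⟩ := hreach
    cases pth with
    | nil => exact absurd rfl hws.symm
    | cons h q => exact ⟨_, h⟩
  obtain ⟨w, hadj⟩ := hxw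
  have hnV : Nonempty V := ⟨s⟩
  have hn0 : (0:ℝ) < (Fintype.card V : ℝ) := by
    have := Fintype.card_pos (α := V)
    exact_mod_cast this
  have hlam0 : ∑ i, lamG G i = 0 := lam_sum_zero G
  have hE0 : graphEnergy G = 2 * (∑ i, lamG G i * gG G i) := by
    unfold graphEnergy energyOf
    simp only [← lamG_def]
    rw [energy_expr G, hlam0]
    ring
  have hermB := selfLoop_isHermitian G S
  have hermC := selfLoop_isHermitian G Sᶜ
  set A := SimpleGraph.adjMatrix ℝ G with hAdef
  have htrBP : ((A + loopDiag S) * PG G).trace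
      = (∑ i, lamG G i * gG G i) + (loopDiag S * PG G).trace := by
    rw [Matrix.add_mul, Matrix.trace_add, AP_trace]
  have htrB : (A + loopDiag S).trace = (S.card : ℝ) := by
    rw [Matrix.trace_add, SimpleGraph.trace_adjMatrix, loopDiag_trace, zero_add]
  have htrCP : ((A + loopDiag Sᶜ) * PG G).trace
      = (∑ i, lamG G i * gG G i) + ((PG G).trace - (loopDiag S * PG G).trace) := by
    rw [Matrix.add_mul, Matrix.trace_add, AP_trace, loopDiag_compl, Matrix.sub_mul,
      Matrix.one_mul, Matrix.trace_sub]
  have hcardc : ((Sᶜ.card : ℕ) : ℝ) = (Fintype.card V : ℝ) - (S.card : ℝ) := by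
    rw [Finset.card_compl]
    push_cast [Nat.cast_sub (Finset.card_le_univ S)]
    ring
  have htrC : (A + loopDiag Sᶜ).trace = (Fintype.card V : ℝ) - (S.card : ℝ) := by
    rw [Matrix.trace_add, SimpleGraph.trace_adjMatrix, loopDiag_trace, zero_add, hcardc]
  have hbB := energy_lower_bound hermB ((S.card : ℝ) / (Fintype.card V : ℝ))
    (PG_psd G) (PG_one_sub_psd G)
  have hbC := energy_lower_bound hermC (((Fintype.card V : ℝ) - (S.card : ℝ)) / (Fintype.card V : ℝ))
    (PG_psd G) (PG_one_sub_psd G)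
  have hselS : ∑ i, |hermB.eigenvalues i - (S.card : ℝ) / (Fintype.card V : ℝ)|
      = selfLoopEnergy G S := rfl
  have hselC : ∑ i, |hermC.eigenvalues i
        - ((Fintype.card V : ℝ) - (S.card : ℝ)) / (Fintype.card V : ℝ)|
      = selfLoopEnergy G Sᶜ := by
    unfold selfLoopEnergy energyOf
    rw [hcardc]
  rw [htrBP, htrB, hselS] at hbB
  rw [htrCP, htrC, hselC] at hbC
  rw [hE0] at hS hSc
  obtain ⟨heqB, heqC, hESeq, hECeq⟩ := arith_core (Fintype.card V : ℝ) (S.card : ℝ)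
    (∑ i, lamG G i * gG G i) ((loopDiag S * PG G).trace) ((PG G).trace)
    (selfLoopEnergy G S) (selfLoopEnergy G Sᶜ) hn0 hbB hbC hS hSc
  have hcommB : (A + loopDiag S) * PG G = PG G * (A + loopDiag S) := by
    refine mul_comm_of_energy_eq hermB ((S.card : ℝ) / (Fintype.card V : ℝ))
      (PG_psd G) (PG_one_sub_psd G) ?_
    rw [htrBP, htrB, hselS, heqB, hESeq]
  have hcommC : (A + loopDiag Sᶜ) * PG G = PG G * (A + loopDiag Sᶜ) := by
    refine mul_comm_of_energy_eq hermC
      (((Fintype.card V : ℝ) - (S.card : ℝ)) / (Fintype.card V : ℝ))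
      (PG_psd G) (PG_one_sub_psd G) ?_
    rw [htrCP, htrC, hselC, heqC, hECeq]
  have hDP : loopDiag S * PG G = PG G * loopDiag S := by
    rw [loopDiag_compl] at hcommC
    ext i j
    have h1 := congrFun (congrFun hcommB i) j
    have h2 := congrFun (congrFun hcommC i) j
    simp only [Matrix.add_mul, Matrix.mul_add, Matrix.sub_mul, Matrix.mul_sub,
      Matrix.one_mul, Matrix.mul_one, Matrix.add_apply, Matrix.sub_apply] at h1 h2
    linarith
  exact final_contra G S s hs w hadj hindep hDP
end

section
/- Let G be a bipartite simple graph on n vertices and S ⊆ V(G) with |S| = α. Then E(G_S) = E(G_{V(G)∖S}). -/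
set_option linter.unusedSectionVars false

open Matrix Finset

section Aux

open Polynomial

variable {n : Type} [Fintype n] [DecidableEq n]

lemma charpoly_conj' (P A Q : Matrix n n ℝ) (hPQ : P * Q = 1) :
    (P * A * Q).charpoly = A.charpoly := by
  have hmap : ∀ M N : Matrix n n ℝ, (M * N).map (C : ℝ →+* ℝ[X]) =
      M.map C * N.map C := fun M N => by
    simp [(RingHom.mapMatrix (C : ℝ →+* ℝ[X]) (m := n)).map_mul M N]
  have h1 : (1 : Matrix n n ℝ).map (C : ℝ →+* ℝ[X]) = 1 := by
    simpa using (RingHom.mapMatrix (C : ℝ →+* ℝ[X]) (m := n)).map_one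
  have hc : charmatrix (P * A * Q) = P.map C * charmatrix A * Q.map C := by
    unfold charmatrix
    simp only [RingHom.mapMatrix_apply]
    rw [mul_sub, sub_mul]
    congr 1
    · rw [mul_assoc, (Matrix.scalar_commute (X : ℝ[X]) (fun r => (Commute.all _ _)) (Q.map C)).eq,
        ← mul_assoc, ← hmap, hPQ, h1, one_mul]
    · rw [hmap, hmap]
  have hdet : (P.map (C : ℝ →+* ℝ[X])).det * (Q.map C).det = 1 := by
    rw [← det_mul, ← hmap, hPQ, h1, det_one]
  rw [Matrix.charpoly, hc, Matrix.charpoly, det_mul, det_mul, mul_right_comm, hdet, one_mul]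

lemma charpoly_diagonal' (v : n → ℝ) :
    (Matrix.diagonal v).charpoly = ∏ i, (X - C (v i)) := by
  have : charmatrix (Matrix.diagonal v) = Matrix.diagonal (fun i => X - C (v i)) := by
    ext i j
    by_cases h : i = j
    · subst h; simp [charmatrix_apply, Matrix.diagonal_apply_eq]
    · simp [charmatrix_apply, Matrix.diagonal_apply_ne _ h, h]
  rw [Matrix.charpoly, this, det_diagonal]

lemma sum_f_eigenvalues {N : Matrix n n ℝ} (hN : N.IsHermitian) (W : Matrix n n ℝ)
    (hW : W * star W = 1) (d : n → ℝ)
    (hNd : N = W * Matrix.diagonal d * star W) (f : ℝ → ℝ) :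
    ∑ i, f (hN.eigenvalues i) = ∑ i, f (d i) := by
  have h1 : N.charpoly = ∏ i, (X - C (d i)) := by
    rw [hNd, charpoly_conj' _ _ _ hW, charpoly_diagonal']
  have h2 : N.charpoly = ∏ i, (X - C (hN.eigenvalues i)) := by
    conv_lhs => rw [hN.spectral_theorem, Unitary.conjStarAlgAut_apply]
    rw [charpoly_conj' _ _ _ (by
      simpa using (Matrix.mem_unitaryGroup_iff.mp (hN.eigenvectorUnitary).2))]
    rw [RCLike.ofReal_real_eq_id]
    simpa using charpoly_diagonal' hN.eigenvalues
  have key : (Finset.univ.val.map hN.eigenvalues) = (Finset.univ.val.map d) := by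
    have heq := h2.symm.trans h1
    have h3 : ((Finset.univ.val.map hN.eigenvalues).map fun a => X - C a).prod
        = ((Finset.univ.val.map d).map fun a => X - C a).prod := by
      rw [Multiset.map_map, Multiset.map_map]; exact heq
    have := congrArg Polynomial.roots h3
    rwa [roots_multiset_prod_X_sub_C, roots_multiset_prod_X_sub_C] at this
  calc ∑ i, f (hN.eigenvalues i) = ((Finset.univ.val.map hN.eigenvalues).map f).sum := by
        rw [Multiset.map_map]; rfl
    _ = ((Finset.univ.val.map d).map f).sum := by rw [key]
    _ = ∑ i, f (d i) := by rw [Multiset.map_map]; rfl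

end Aux

/-- For a bipartite graph, `E(G_S) = E(G_{V∖S})`. -/
theorem selfLoopEnergy_compl_of_bipartite {V : Type} [Fintype V] [DecidableEq V]
    (G : SimpleGraph V) [DecidableRel G.Adj] (hG : G.Colorable 2) (S : Finset V) :
    selfLoopEnergy G S = selfLoopEnergy G Sᶜ := by
  rcases isEmpty_or_nonempty V with hV | hV
  · simp [selfLoopEnergy, energyOf]
  obtain ⟨col⟩ := hG
  set z : V → ℝ := fun v => if col v = 0 then 1 else -1 with hz
  set Z : Matrix V V ℝ := Matrix.diagonal z with hZdef
  set A := SimpleGraph.adjMatrix ℝ G with hA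
  have hzsq : ∀ v, z v * z v = 1 := by
    intro v; by_cases h : col v = 0 <;> simp [hz, h]
  have hZZ : Z * Z = 1 := by
    rw [hZdef, Matrix.diagonal_mul_diagonal, ← Matrix.diagonal_one]
    exact congrArg Matrix.diagonal (funext fun v => hzsq v)
  have hstarZ : star Z = Z := by
    rw [Matrix.star_eq_conjTranspose, hZdef, Matrix.diagonal_conjTranspose]
    simp
  have hZA : Z * A * Z = -A := by
    ext i j
    simp only [hZdef, Matrix.diagonal_mul, Matrix.mul_diagonal, Matrix.neg_apply]
    by_cases hadj : G.Adj i j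
    · have hne : col i ≠ col j := col.valid hadj
      have hprod : z i * z j = -1 := by
        by_cases hi : col i = 0 <;> by_cases hj : col j = 0
        · exact absurd (hi.trans hj.symm) hne
        · simp [hz, hi, hj]
        · simp [hz, hi, hj]
        · exact absurd ((Fin.eq_one_of_ne_zero _ hi).trans
            (Fin.eq_one_of_ne_zero _ hj).symm) hne
      have hAij : A i j = 1 := by simp [hA, hadj]
      rw [hAij, mul_one, hprod]
    · have hAij : A i j = 0 := by simp [hA, hadj]
      rw [hAij]; ring
  have hZD : ∀ T : Finset V, Z * loopDiag T * Z = loopDiag T := by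
    intro T
    rw [hZdef, loopDiag, Matrix.diagonal_mul_diagonal, Matrix.diagonal_mul_diagonal]
    refine congrArg Matrix.diagonal (funext fun v => ?_)
    by_cases h : v ∈ T <;> by_cases h2 : col v = 0 <;> norm_num [hz, h, h2]
  have hDD : loopDiag S + loopDiag Sᶜ = 1 := by
    rw [loopDiag, loopDiag, Matrix.diagonal_add, ← Matrix.diagonal_one]
    refine congrArg Matrix.diagonal (funext fun v => ?_)
    by_cases h : v ∈ S <;> simp [h]
  set M := A + loopDiag S with hM
  set N := A + loopDiag Sᶜ with hN
  have hMherm := selfLoop_isHermitian G S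
  have hNherm := selfLoop_isHermitian G Sᶜ
  have hNZ : N = Z * (1 - M) * Z := by
    have e1 : Z * (1 - M) * Z = Z * Z - (Z * A * Z + Z * loopDiag S * Z) := by
      rw [hM]; noncomm_ring
    rw [e1, hZZ, hZA, hZD, hN, ← hDD]
    abel
  set U : Matrix V V ℝ := (hMherm.eigenvectorUnitary : Matrix V V ℝ) with hU
  have hUU : U * star U = 1 :=
    Matrix.mem_unitaryGroup_iff.mp (hMherm.eigenvectorUnitary).2
  have hspec : M = U * Matrix.diagonal hMherm.eigenvalues * star U := by
    have := hMherm.spectral_theorem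
    rwa [RCLike.ofReal_real_eq_id] at this
  set lam := hMherm.eigenvalues with hlam
  have hNW : N = (Z * U) * Matrix.diagonal (fun i => 1 - lam i) * star (Z * U) := by
    have h1M : 1 - M = U * Matrix.diagonal (fun i => 1 - lam i) * star U := by
      have hd : Matrix.diagonal (fun i : V => (1:ℝ) - lam i)
          = 1 - Matrix.diagonal lam := by
        rw [← Matrix.diagonal_one, ← Matrix.diagonal_sub]
      rw [hd, mul_sub, sub_mul, mul_one, hUU, ← hspec]
    rw [hNZ, h1M, Matrix.star_mul, hstarZ]
    noncomm_ring
  have hWW : (Z * U) * star (Z * U) = 1 := by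
    rw [Matrix.star_mul, hstarZ, mul_assoc, ← mul_assoc U, hUU, one_mul, hZZ]
  have hn : (0:ℝ) < (Fintype.card V : ℝ) := by
    exact_mod_cast Fintype.card_pos
  have hcard : ((Sᶜ.card : ℝ)) = (Fintype.card V : ℝ) - S.card := by
    rw [Finset.card_compl]
    push_cast [Nat.cast_sub (Finset.card_le_univ S)]
    ring
  have key := sum_f_eigenvalues hNherm (Z * U) hWW (fun i => 1 - lam i) hNW
    (fun x => |x - (Sᶜ.card : ℝ) / (Fintype.card V)|)
  rw [selfLoopEnergy, selfLoopEnergy, energyOf, energyOf]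
  rw [key]
  apply Finset.sum_congr rfl
  intro i _
  have heq : 1 - lam i - (Sᶜ.card : ℝ) / (Fintype.card V)
      = -(lam i - (S.card : ℝ) / (Fintype.card V)) := by
    rw [hcard]; field_simp; ring
  rw [heq, abs_neg]
end
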